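/- Let (ξ*, η*) ∈ ℝ^{d+1} × ℝ^{n+1} satisfy ξ₀* = −η₀* ≠ 0, ξ̄* = 0, η̄* = 0, and let τ₀ > 0, R > 0. Then there exist ε > 0 and δ > 0 (depending on θ, ω, ξ₀*, τ₀, R) such that for every (ξ,η) with |ξ − ξ*| + |η − η*| < δ, every X ∈ ℝ^{d+1}, Y ∈ ℝ^{n+1} with X₀ + Y₀ = 0 and |X| + |Y| ≤ R, and every τ ≥ τ₀: |(X + τθ)·ξ − (Y + τω)·η| ≥ ε τ. -/

import Mathlib

/-- The tail `ξ̄ = (ξ₁, …, ξ_m)` of a vector `ξ = (ξ₀, ξ̄) ∈ ℝ^{m+1}`. -/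
noncomputable def tailVec {m : ℕ} (ξ : EuclideanSpace ℝ (Fin (m + 1))) :
    EuclideanSpace ℝ (Fin m) := WithLp.toLp 2 (fun i : Fin m => ξ i.succ)

lemma inner_tail_zero {m : ℕ} (ζ v : EuclideanSpace ℝ (Fin (m + 1)))
    (hz : tailVec ζ = 0) : (inner ℝ v ζ : ℝ) = v 0 * ζ 0 := by
  have hz' : ∀ i : Fin m, ζ i.succ = 0 := fun i => by
    have := congrArg (fun v => v i) hz; simpa [tailVec] using this
  rw [PiLp.inner_apply, Fin.sum_univ_succ]
  simp [hz', mul_comm]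

/-- near a point `(ξ*, η*)` with `ξ₀* = −η₀* ≠ 0`, `ξ̄* = 0`, `η̄* = 0`, the
phase `x·ξ − y·η` (with `x = X + τθ`, `y = Y + τω`) satisfies `|x·ξ − y·η| ≥ ε τ` uniformly
over `|X| + |Y| ≤ R`, `X₀ + Y₀ = 0`, and `τ ≥ τ₀`. -/
theorem phase_lower_bound_near_C1
    (d n : ℕ) (hd : 1 ≤ d) (hn : 1 ≤ n)
    (θ : EuclideanSpace ℝ (Fin (d + 1))) (ω : EuclideanSpace ℝ (Fin (n + 1)))
    (hθ : ‖θ‖ = 1) (hω : ‖ω‖ = 1) (hnontang : θ 0 + ω 0 ≠ 0)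
    (ξs : EuclideanSpace ℝ (Fin (d + 1))) (ηs : EuclideanSpace ℝ (Fin (n + 1)))
    (h0 : ξs 0 = -ηs 0) (h0ne : ξs 0 ≠ 0)
    (hbarξ : tailVec ξs = 0) (hbarη : tailVec ηs = 0)
    (τ₀ R : ℝ) (hτ₀ : 0 < τ₀) (hR : 0 < R) :
    ∃ ε > (0 : ℝ), ∃ δ > (0 : ℝ),
      ∀ (ξ : EuclideanSpace ℝ (Fin (d + 1))) (η : EuclideanSpace ℝ (Fin (n + 1))),
        ‖ξ - ξs‖ + ‖η - ηs‖ < δ →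
        ∀ (X : EuclideanSpace ℝ (Fin (d + 1))) (Y : EuclideanSpace ℝ (Fin (n + 1))),
          X 0 + Y 0 = 0 → ‖X‖ + ‖Y‖ ≤ R →
          ∀ τ : ℝ, τ₀ ≤ τ →
            ε * τ ≤ |(inner ℝ (X + τ • θ) ξ : ℝ) - (inner ℝ (Y + τ • ω) η : ℝ)| := by
  set c : ℝ := |ξs 0| * |θ 0 + ω 0| with hc
  have hcpos : 0 < c := mul_pos (abs_pos.mpr h0ne) (abs_pos.mpr hnontang)
  refine ⟨c / 2, by positivity, c * τ₀ / (2 * (R + τ₀)), by positivity, ?_⟩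
  intro ξ η hδ X Y hXY hXYle τ hτ
  have hτpos : 0 < τ := hτ₀.trans_le hτ
  have hXle : ‖X‖ ≤ R := le_trans (le_add_of_nonneg_right (norm_nonneg Y)) hXYle
  have hYle : ‖Y‖ ≤ R := le_trans (le_add_of_nonneg_left (norm_nonneg X)) hXYle
  -- main term
  have hmainξ : (inner ℝ (X + τ • θ) ξs : ℝ) = (X 0 + τ * θ 0) * ξs 0 := by
    rw [inner_tail_zero ξs _ hbarξ]
    simp [smul_eq_mul]
  have hmainη : (inner ℝ (Y + τ • ω) ηs : ℝ) = (Y 0 + τ * ω 0) * ηs 0 := by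
    rw [inner_tail_zero ηs _ hbarη]
    simp [smul_eq_mul]
  set M : ℝ := (inner ℝ (X + τ • θ) ξs : ℝ) - (inner ℝ (Y + τ • ω) ηs : ℝ) with hM
  have hMval : M = τ * ((θ 0 + ω 0) * ξs 0) := by
    rw [hM, hmainξ, hmainη, h0]
    linear_combination (-(ηs 0)) * hXY
  have hMabs : |M| = c * τ := by
    rw [hMval, abs_mul, abs_mul, abs_of_pos hτpos]; ring
  -- error terms
  set E : ℝ := (inner ℝ (X + τ • θ) (ξ - ξs) : ℝ) - (inner ℝ (Y + τ • ω) (η - ηs) : ℝ) with hE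
  have hnX : ‖X + τ • θ‖ ≤ R + τ := by
    calc ‖X + τ • θ‖ ≤ ‖X‖ + ‖τ • θ‖ := norm_add_le _ _
    _ = ‖X‖ + τ := by rw [norm_smul, hθ, Real.norm_eq_abs, abs_of_pos hτpos, mul_one]
    _ ≤ R + τ := by linarith
  have hnY : ‖Y + τ • ω‖ ≤ R + τ := by
    calc ‖Y + τ • ω‖ ≤ ‖Y‖ + ‖τ • ω‖ := norm_add_le _ _
    _ = ‖Y‖ + τ := by rw [norm_smul, hω, Real.norm_eq_abs, abs_of_pos hτpos, mul_one]
    _ ≤ R + τ := by linarith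
  have hE1 : |(inner ℝ (X + τ • θ) (ξ - ξs) : ℝ)| ≤ (R + τ) * ‖ξ - ξs‖ :=
    (abs_real_inner_le_norm _ _).trans
      (mul_le_mul_of_nonneg_right hnX (norm_nonneg _))
  have hE2 : |(inner ℝ (Y + τ • ω) (η - ηs) : ℝ)| ≤ (R + τ) * ‖η - ηs‖ :=
    (abs_real_inner_le_norm _ _).trans
      (mul_le_mul_of_nonneg_right hnY (norm_nonneg _))
  have hEabs : |E| ≤ (R + τ) * (‖ξ - ξs‖ + ‖η - ηs‖) := by
    calc |E| ≤ |(inner ℝ (X + τ • θ) (ξ - ξs) : ℝ)| + |(inner ℝ (Y + τ • ω) (η - ηs) : ℝ)| :=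
      abs_sub _ _
    _ ≤ (R + τ) * ‖ξ - ξs‖ + (R + τ) * ‖η - ηs‖ := add_le_add hE1 hE2
    _ = (R + τ) * (‖ξ - ξs‖ + ‖η - ηs‖) := by ring
  have hEsmall : |E| ≤ c / 2 * τ := by
    have h1 : (R + τ) * (‖ξ - ξs‖ + ‖η - ηs‖) ≤ (R + τ) * (c * τ₀ / (2 * (R + τ₀))) := by
      apply mul_le_mul_of_nonneg_left hδ.le (by linarith)
    have h2 : (R + τ) * (c * τ₀ / (2 * (R + τ₀))) ≤ c / 2 * τ := by
      rw [mul_div_assoc', div_le_iff₀ (by positivity : (0:ℝ) < 2 * (R + τ₀))]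
      nlinarith [mul_le_mul_of_nonneg_left hτ (mul_pos hcpos hR).le]
    linarith [hEabs]
  -- combine
  have hsplit : (inner ℝ (X + τ • θ) ξ : ℝ) - (inner ℝ (Y + τ • ω) η : ℝ) = M + E := by
    rw [hM, hE, inner_sub_right, inner_sub_right]; ring
  rw [hsplit]
  have := abs_add_le (M + E) (-E)
  simp only [add_neg_cancel_right, abs_neg] at this
  have hMle : |M| - |E| ≤ |M + E| := by linarith
  rw [hMabs] at hMle
  linarith [hEsmall]
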